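/- Let (F_s)_{s=0}^T be a filtration and (Y_s)_{s=0}^T a sequence of random variables with Y_s F_s-measurable, Y_s ∈ (1/2)ℤ_{≥0}, Y₀ ≤ T/8, Y_{s+1} ≤ Y_s + 1, and such that P(Y_{s+1} ≤ Y_s − (1/2)·1_{Y_s>0} | F_s) ≥ 1 − q whenever Y_s ≥ ⌊(T−s)/16⌋. Then P(Y_T = 0) ≥ 1 − 4 q^{1/8}. -/

import Mathlib

open MeasureTheory


lemma walk_bound (y : ℕ → ℝ) (p : ℕ → Prop) [DecidablePred p] (a : ℕ) :
    ∀ t, a ≤ t →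
    (∀ s, a ≤ s → s < t → (y (s+1) ≤ y s + 1) ∧ (¬ p s → y (s+1) ≤ y s - 1/2)) →
    y t ≤ y a + (3/2) * ((Finset.Ico a t).filter p).card - ((t:ℝ) - a)/2 := by
  intro t ht
  induction t, ht using Nat.le_induction with
  | base => simp
  | succ t ht ih =>
    intro h
    have ih' := ih (fun s hs hs' => h s hs (by omega))
    have hins : Finset.Ico a (t+1) = insert t (Finset.Ico a t) :=
      Nat.Ico_succ_right_eq_insert_Ico ht
    rw [hins, Finset.filter_insert]
    by_cases hp : p t
    · rw [if_pos hp, Finset.card_insert_of_notMem (by simp)]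
      have := (h t ht (by omega)).1
      push_cast
      linarith
    · rw [if_neg hp]
      have := (h t ht (by omega)).2 hp
      push_cast
      linarith

lemma window_count (T a : ℕ) (y : ℕ → ℝ) (bad : ℕ → Prop) [DecidablePred bad]
    (haT : a ≤ T)
    (hstep : ∀ s, y (s+1) ≤ y s + 1)
    (hsucc : ∀ s, a ≤ s → s < T → ¬ bad s → y (s+1) ≤ y s - 1/2)
    (hyT : 1/2 ≤ y T) :
    (T:ℝ) - a + 1 - 2 * y a ≤ 3 * ((Finset.Ico a T).filter bad).card := by
  have := walk_bound y bad a T haT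
    (fun s hs hs' => ⟨hstep s, hsucc s hs hs'⟩)
  linarith

lemma exists_bad_window (T : ℕ) (y : ℕ → ℝ)
    (hhalf : ∀ s, ∃ k : ℕ, y s = (k:ℝ) / 2)
    (hstart : y 0 ≤ (T:ℝ) / 8)
    (hstep : ∀ s, y (s+1) ≤ y s + 1)
    (hT : y T ≠ 0) :
    ∃ m : ℕ, 1 ≤ m ∧ m ≤ T ∧ ∃ S : Finset ℕ, S ⊆ Finset.Ico (T - m) T ∧
      (m : ℝ) ≤ 8 * S.card ∧
      ∀ s ∈ S, ((((T - s) / 16 : ℕ) : ℝ) ≤ y s ∧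
        ¬ (y (s+1) ≤ y s - (if 0 < y s then 1/2 else 0))) := by
  classical
  have hy0 : ∀ s, 0 ≤ y s := by
    intro s; obtain ⟨k, hk⟩ := hhalf s; rw [hk]; positivity
  have hyhalf : ∀ s, y s ≠ 0 → 1/2 ≤ y s := by
    intro s hs
    obtain ⟨k, hk⟩ := hhalf s
    rcases Nat.eq_zero_or_pos k with h0 | h1
    · exfalso; apply hs; rw [hk, h0]; norm_num
    · rw [hk]
      have : (1:ℝ) ≤ (k:ℝ) := by exact_mod_cast h1
      linarith
  have hyT : 1/2 ≤ y T := hyhalf T hT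
  have hTpos : 0 < T := by
    by_contra h
    have hT0 : T = 0 := by omega
    apply hT
    have h1 := hstart
    rw [hT0] at h1 ⊢
    simp at h1
    exact le_antisymm h1 (hy0 0)
  -- define above
  set above : ℕ → Prop := fun s => ((((T - s) / 16 : ℕ) : ℝ) ≤ y s) with habove_def
  set bad : ℕ → Prop :=
    fun s => above s ∧ ¬ (y (s+1) ≤ y s - (if 0 < y s then 1/2 else 0)) with hbad_def
  -- Stage 1: find u
  have stage1 : ∃ u : ℕ, u < T ∧ (∀ s, u ≤ s → s < T → above s) ∧
      (u = 0 ∨ (16 * y u ≤ (T:ℝ) - u + 17 ∧ u + 3 ≤ T)) := by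
    by_cases hex : ∃ s, s < T ∧ ¬ above s
    · obtain ⟨s₀, hs₀⟩ := hex
      set pA : ℕ → Prop := fun s => s < T ∧ ¬ above s with hpA
      set t0 := Nat.findGreatest pA T with ht0def
      have ht0 : pA t0 := Nat.findGreatest_spec (le_of_lt hs₀.1) hs₀
      have hgr : ∀ k, t0 < k → k ≤ T → ¬ pA k :=
        fun k hk hk' => Nat.findGreatest_is_greatest hk hk'
      -- T - t0 ≥ 16
      have h16 : 16 ≤ T - t0 := by
        by_contra hlt
        have : (T - t0) / 16 = 0 := by omega
        apply ht0.2
        rw [habove_def]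
        simp only [this]
        simpa using hy0 t0
      refine ⟨t0 + 1, by omega, ?_, Or.inr ⟨?_, by omega⟩⟩
      · intro s hs hs'
        by_contra hna
        exact hgr s (by omega) (by omega) ⟨hs', hna⟩
      · have hc : ((((T - t0) / 16 : ℕ)) : ℝ) ≤ ((T - t0 : ℕ) : ℝ) / 16 :=
          Nat.cast_div_le
      
        have hnat : ((T - t0 : ℕ) : ℝ) = (T:ℝ) - t0 := by
          have : t0 ≤ T := by omega
          push_cast [this]; ring
        have hy : y t0 < (((T - t0) / 16 : ℕ) : ℝ) := by
          have := ht0.2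
          rw [habove_def] at this
          linarith [lt_of_not_ge this]
        have hstep0 := hstep t0
        rw [hnat] at hc
        push_cast
        linarith
    · push_neg at hex
      exact ⟨0, hTpos, fun s _ hs => hex s hs, Or.inl rfl⟩
  obtain ⟨u, huT, hu1, hu5⟩ := stage1
  -- Stage 2: find a (last zero after u, if any)
  have stage2 : ∃ a : ℕ, u ≤ a ∧ a < T ∧
      (∀ s, a ≤ s → s < T → ¬ bad s → y (s+1) ≤ y s - 1/2) ∧
      (y a = 0 ∨ a = u) := by
    by_cases hz : ∃ s, u ≤ s ∧ s ≤ T ∧ y s = 0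
    · obtain ⟨s₁, hs₁⟩ := hz
      set pz : ℕ → Prop := fun s => u ≤ s ∧ s ≤ T ∧ y s = 0 with hpz
      set σ := Nat.findGreatest pz T with hσdef
      have hσ : pz σ := Nat.findGreatest_spec hs₁.2.1 hs₁
      have hgrz : ∀ k, σ < k → k ≤ T → ¬ pz k :=
        fun k hk hk' => Nat.findGreatest_is_greatest hk hk'
      have hσT : σ < T := by
        rcases lt_or_eq_of_le hσ.2.1 with h | h
        · exact h
        · exfalso; apply hT; rw [← h]; exact hσ.2.2
      refine ⟨σ, hσ.1, hσT, ?_, Or.inl hσ.2.2⟩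
      intro s hs hs' hnb
      have habv : above s := hu1 s (le_trans hσ.1 hs) hs'
      have hsucc : y (s+1) ≤ y s - (if 0 < y s then 1/2 else 0) := by
        by_contra hc
        exact hnb ⟨habv, hc⟩
      rcases lt_or_eq_of_le hs with hgt | heq
      · -- s > σ : y s ≠ 0
        have hne : y s ≠ 0 := by
          intro h0
          exact hgrz s hgt (le_of_lt hs') ⟨le_trans hσ.1 (le_of_lt hgt), le_of_lt hs', h0⟩
        have hpos : 0 < y s := lt_of_le_of_ne (hy0 s) (Ne.symm hne)
        rwa [if_pos hpos] at hsucc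
      · -- s = σ : contradiction
        exfalso
        have hys : y s = 0 := by rw [← heq]; exact hσ.2.2
        have h0 : ¬ 0 < y s := by rw [hys]; simp
        rw [if_neg h0, hys] at hsucc
        have h1 : y (s+1) = 0 := le_antisymm (by linarith) (hy0 _)
        have huσ : u ≤ σ := hσ.1
        exact hgrz (s+1) (by omega) (by omega) ⟨by omega, by omega, h1⟩
    · push_neg at hz
      refine ⟨u, le_refl u, huT, ?_, Or.inr rfl⟩
      intro s hs hs' hnb
      have habv : above s := hu1 s hs hs'
      have hsucc : y (s+1) ≤ y s - (if 0 < y s then 1/2 else 0) := by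
        by_contra hc
        exact hnb ⟨habv, hc⟩
      have hne : y s ≠ 0 := hz s hs (le_of_lt hs')
      have hpos : 0 < y s := lt_of_le_of_ne (hy0 s) (Ne.symm hne)
      rwa [if_pos hpos] at hsucc
  obtain ⟨a, hua, haT, hsucc, hcase⟩ := stage2
  -- apply window_count
  have hcount := window_count T a y bad (le_of_lt haT) hstep hsucc hyT
  set S := (Finset.Ico a T).filter bad with hSdef
  set m := T - a with hmdef
  have hmcast : ((m:ℕ) : ℝ) = (T:ℝ) - a := by
    rw [hmdef]; push_cast [le_of_lt haT]; ring
  have hfnn : (0:ℝ) ≤ S.card := by positivity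
  have hkey : (m : ℝ) ≤ 8 * S.card := by
    rcases hcase with h0 | hau
    · -- y a = 0
      rw [h0] at hcount
      rw [hmcast]; linarith
    · rcases hu5 with hu0 | ⟨hub, hu3⟩
      · -- u = 0, y a = y 0 ≤ T/8
        have ha0 : a = 0 := by omega
        have hya : y a ≤ (T:ℝ)/8 := by rw [hau, hu0]; exact hstart
        have hacast : ((a:ℕ):ℝ) = 0 := by rw [ha0]; simp
        have hTnn : (0:ℝ) ≤ (T:ℝ) := by positivity
        rw [hmcast]
        linarith
      · -- 16 y u ≤ T - u + 17, and a = u, m = T - u ≥ 3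
        have hya : 16 * y a ≤ (T:ℝ) - a + 17 := by rw [hau]; exact hub
        have hm3 : (3:ℝ) ≤ (T:ℝ) - a := by
          rw [hau]
          have : (u:ℝ) + 3 ≤ (T:ℝ) := by exact_mod_cast hu3
          linarith
        rw [hmcast]; linarith
  refine ⟨m, by omega, by omega, S, ?_, hkey, ?_⟩
  · have : T - m = a := by omega
    rw [this, hSdef]
    exact Finset.filter_subset _ _
  · intro s hs
    rw [hSdef] at hs
    have := (Finset.mem_filter.mp hs).2
    rw [hbad_def] at this
    exact this


lemma pow_card_le (q : ℝ) (hq0 : 0 ≤ q) (hq1 : q ≤ 1) (m c : ℕ) (hm : 1 ≤ m)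
    (hc : (m:ℝ) ≤ 8 * c) : q ^ c ≤ (q ^ ((1:ℝ)/8)) ^ m := by
  have hrm : (q ^ ((1:ℝ)/8)) ^ m = q ^ ((1/8 : ℝ) * m) := by
    rw [Real.rpow_mul hq0, Real.rpow_natCast]
  rw [hrm]
  rcases eq_or_lt_of_le hq0 with h0 | hpos
  · have hc1 : 1 ≤ c := by
      by_contra h
      have : c = 0 := by omega
      rw [this] at hc
      simp at hc
      have : (1:ℝ) ≤ (m:ℝ) := by exact_mod_cast hm
      linarith
    rw [← h0]
    rw [zero_pow (by omega), Real.zero_rpow]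
    have : (1:ℝ) ≤ (m:ℝ) := by exact_mod_cast hm
    positivity
  · rw [← Real.rpow_natCast q c]
    apply Real.rpow_le_rpow_of_exponent_ge hpos hq1
    linarith

lemma geom_tail (x : ℝ) (h0 : 0 ≤ x) (h2 : x ≤ 1/2) (T : ℕ) :
    ∑ m ∈ Finset.Icc 1 T, x ^ m ≤ 2 * x := by
  have key : ∀ T : ℕ, ∑ m ∈ Finset.Icc 1 T, x ^ m ≤ 2 * x * (1 - x ^ T) := by
    intro T
    induction T with
    | zero => simp
    | succ T ih =>
      rw [Finset.sum_Icc_succ_top (by omega)]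
      have hxT : 0 ≤ x ^ T := pow_nonneg h0 T
      have h2x : 2 * x ^ (T+1) * x ≤ x ^ (T+1) := by
        have := pow_nonneg h0 (T+1)
        nlinarith
      have : x ^ (T+1) = x ^ T * x := pow_succ x T
      nlinarith [pow_nonneg h0 (T+1)]
  calc ∑ m ∈ Finset.Icc 1 T, x ^ m ≤ 2 * x * (1 - x ^ T) := key T
    _ ≤ 2 * x := by nlinarith [pow_nonneg h0 T]


lemma step_bound {Ω : Type*} {m0 : MeasurableSpace Ω} (μ : Measure Ω) [IsProbabilityMeasure μ]
    (F : Filtration ℕ m0) (n : ℕ)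
    (Succ Thr A : Set Ω) (hSucc : MeasurableSet Succ) (hThr : MeasurableSet[F n] Thr)
    (hA : MeasurableSet[F n] A)
    (q : ℝ) (hq0 : 0 ≤ q)
    (hdrift : ∀ᵐ ω ∂μ, ω ∈ Thr →
      1 - q ≤ (μ[Set.indicator Succ (fun _ => (1:ℝ))|F n]) ω) :
    (μ (A ∩ (Thr ∩ Succᶜ))).toReal ≤ q * (μ A).toReal := by
  classical
  have hm : F n ≤ m0 := F.le n
  set B := A ∩ Thr with hBdef
  have hBm : MeasurableSet[F n] B := hA.inter hThr
  have hB : MeasurableSet B := hm _ hBm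
  have hrw : A ∩ (Thr ∩ Succᶜ) = Succᶜ ∩ B := by
    rw [hBdef]; ext ω; simp [Set.mem_inter_iff]; tauto
  have hint : Integrable (Set.indicator Succᶜ (fun _ => (1:ℝ))) μ :=
    (integrable_const (1:ℝ)).indicator hSucc.compl
  have hintS : Integrable (Set.indicator Succ (fun _ => (1:ℝ))) μ :=
    (integrable_const (1:ℝ)).indicator hSucc
  -- μ (Succᶜ ∩ B) as an integral
  have h1 : (μ (Succᶜ ∩ B)).toReal
      = ∫ ω in B, Set.indicator Succᶜ (fun _ => (1:ℝ)) ω ∂μ := by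
    rw [setIntegral_indicator hSucc.compl, setIntegral_const]
    rw [Set.inter_comm]
    simp
    rfl
  -- replace by condexp
  have h2 : ∫ ω in B, Set.indicator Succᶜ (fun _ => (1:ℝ)) ω ∂μ
      = ∫ ω in B, (μ[Set.indicator Succᶜ (fun _ => (1:ℝ))|F n]) ω ∂μ :=
    (setIntegral_condExp hm hint hBm).symm
  -- condexp of complement indicator
  have h3 : μ[Set.indicator Succᶜ (fun _ => (1:ℝ))|F n]
      =ᵐ[μ] fun ω => 1 - (μ[Set.indicator Succ (fun _ => (1:ℝ))|F n]) ω := by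
    have hfun : Set.indicator Succᶜ (fun _ => (1:ℝ))
        = (fun _ => (1:ℝ)) - Set.indicator Succ (fun _ => (1:ℝ)) := by
      funext ω
      by_cases hω : ω ∈ Succ <;>
        simp [Set.indicator_of_mem, Set.indicator_of_notMem, hω]
    rw [hfun]
    calc μ[(fun _ => (1:ℝ)) - Set.indicator Succ (fun _ => (1:ℝ))|F n]
        =ᵐ[μ] μ[(fun _ => (1:ℝ))|F n] - μ[Set.indicator Succ (fun _ => (1:ℝ))|F n] :=
          condExp_sub (integrable_const 1) hintS _
      _ =ᵐ[μ] fun ω => 1 - (μ[Set.indicator Succ (fun _ => (1:ℝ))|F n]) ω := by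
          rw [condExp_const hm (1:ℝ)]
          exact Filter.EventuallyEq.rfl
  -- bound the integral
  have h4 : ∫ ω in B, (μ[Set.indicator Succᶜ (fun _ => (1:ℝ))|F n]) ω ∂μ
      ≤ ∫ ω in B, q ∂μ := by
    apply setIntegral_mono_ae_restrict integrable_condExp.integrableOn
      (integrableOn_const (measure_ne_top μ B))
    have hmem : ∀ᵐ ω ∂(μ.restrict B), ω ∈ B := ae_restrict_mem hB
    have hd : ∀ᵐ ω ∂(μ.restrict B), ω ∈ Thr →
        1 - q ≤ (μ[Set.indicator Succ (fun _ => (1:ℝ))|F n]) ω :=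
      ae_restrict_of_ae hdrift
    have h3' : ∀ᵐ ω ∂(μ.restrict B), (μ[Set.indicator Succᶜ (fun _ => (1:ℝ))|F n]) ω
        = 1 - (μ[Set.indicator Succ (fun _ => (1:ℝ))|F n]) ω := ae_restrict_of_ae h3
    filter_upwards [hmem, hd, h3'] with ω h₁ h₂ h₃
    rw [h₃]
    have := h₂ h₁.2
    linarith
  have h5 : ∫ ω in B, q ∂μ = (μ B).toReal * q := by
    rw [setIntegral_const]; simp [Measure.real]
  have h6 : (μ B).toReal ≤ (μ A).toReal :=
    ENNReal.toReal_mono (measure_ne_top μ A) (measure_mono Set.inter_subset_left)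
  rw [hrw]
  rw [h1, h2]
  calc _ ≤ (μ B).toReal * q := by rw [← h5]; exact h4
    _ ≤ (μ A).toReal * q := mul_le_mul_of_nonneg_right h6 hq0
    _ = q * (μ A).toReal := mul_comm _ _

lemma prod_bound {Ω : Type*} {m0 : MeasurableSpace Ω} (μ : Measure Ω) [IsProbabilityMeasure μ]
    (F : Filtration ℕ m0) (T : ℕ) (Bad : ℕ → Set Ω)
    (hBadMeas : ∀ s, MeasurableSet[F (s+1)] (Bad s))
    (q : ℝ) (hq0 : 0 ≤ q)
    (hstep : ∀ n, n < T → ∀ A : Set Ω, MeasurableSet[F n] A →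
      (μ (A ∩ Bad n)).toReal ≤ q * (μ A).toReal) :
    ∀ n : ℕ, ∀ S : Finset ℕ, (∀ s ∈ S, s < T) → S ⊆ Finset.range n →
      (μ (⋂ s ∈ S, Bad s)).toReal ≤ q ^ S.card := by
  intro n
  induction n with
  | zero =>
    intro S hT hsub
    have : S = ∅ := Finset.subset_empty.mp (by simpa using hsub)
    subst this
    simp
  | succ n ih =>
    intro S hT hsub
    by_cases hn : n ∈ S
    · set S' := S.erase n with hS'def
      have hS'sub : S' ⊆ Finset.range n := by
        intro s hs
        have h1 := Finset.mem_of_mem_erase hs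
        have h2 := Finset.ne_of_mem_erase hs
        have := hsub h1
        simp only [Finset.mem_range] at this ⊢
        omega
      have hA : MeasurableSet[F n] (⋂ s ∈ S', Bad s) := by
        apply MeasurableSet.biInter (Set.to_countable _)
        intro s hs
        have hsn : s + 1 ≤ n := by
          have := hS'sub hs; simp only [Finset.mem_range] at this; omega
        exact F.mono hsn _ (hBadMeas s)
      have hins : S = insert n S' := (Finset.insert_erase hn).symm
      have hEq : (⋂ s ∈ S, Bad s) = (⋂ s ∈ S', Bad s) ∩ Bad n := by
        rw [hins, Finset.set_biInter_insert, Set.inter_comm]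
      have hcard : S.card = S'.card + 1 := by
        rw [hins, Finset.card_insert_of_notMem (Finset.notMem_erase n S)]
      rw [hEq, hcard, pow_succ]
      calc (μ ((⋂ s ∈ S', Bad s) ∩ Bad n)).toReal
          ≤ q * (μ (⋂ s ∈ S', Bad s)).toReal := hstep n (hT n hn) _ hA
        _ ≤ q * q ^ S'.card := by
            apply mul_le_mul_of_nonneg_left _ hq0
            exact ih S' (fun s hs => hT s (Finset.mem_of_mem_erase hs)) hS'sub
        _ = q ^ S'.card * q := mul_comm _ _
    · apply ih S hT
      intro s hs
      have := hsub hs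
      simp only [Finset.mem_range] at this ⊢
      have : s ≠ n := fun h => hn (h ▸ hs)
      omega

/-- Random walk lemma: let `(Y_s)_{s=0}^T` be adapted to a filtration `(F_s)`,
taking values in `(1/2)ℤ_{≥0}`, with `Y₀ ≤ T/8`, `Y_{s+1} ≤ Y_s + 1`, and
`P(Y_{s+1} ≤ Y_s − (1/2)·1_{Y_s>0} | F_s) ≥ 1 − q` whenever
`Y_s ≥ ⌊(T−s)/16⌋`.  Then `P(Y_T = 0) ≥ 1 − 4·q^{1/8}`. -/
theorem random_walk_hits_zero {Ω : Type*} {m0 : MeasurableSpace Ω}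
    (μ : Measure Ω) [IsProbabilityMeasure μ]
    (F : Filtration ℕ m0) (T : ℕ) (Y : ℕ → Ω → ℝ)
    (hadapted : ∀ s, Measurable[F s] (Y s))
    (hhalf : ∀ s ω, ∃ k : ℕ, Y s ω = (k : ℝ) / 2)
    (hstart : ∀ ω, Y 0 ω ≤ (T : ℝ) / 8)
    (hstep : ∀ s ω, Y (s + 1) ω ≤ Y s ω + 1)
    (q : ℝ) (hq0 : 0 ≤ q) (hq1 : q ≤ 1)
    (hdrift : ∀ s < T, ∀ᵐ ω ∂μ,
      ((((T - s) / 16 : ℕ) : ℝ) ≤ Y s ω) →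
        1 - q ≤
          (μ[Set.indicator
              {ω' | Y (s + 1) ω' ≤ Y s ω' - (if 0 < Y s ω' then 1 / 2 else 0)}
              (fun _ => (1 : ℝ))|F s]) ω) :
    1 - 4 * q ^ ((1 : ℝ) / 8) ≤ (μ {ω | Y T ω = 0}).toReal := by
  classical
  set r := q ^ ((1 : ℝ) / 8) with hrdef
  have hr0 : 0 ≤ r := Real.rpow_nonneg hq0 _
  by_cases hbig : 1 ≤ 4 * r
  · calc 1 - 4 * r ≤ 0 := by linarith
      _ ≤ _ := ENNReal.toReal_nonneg
  push_neg at hbig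
  -- basic measurability
  have hYm : ∀ s, Measurable (Y s) := fun s => (hadapted s).mono (F.le s) le_rfl
  set Succ : ℕ → Set Ω :=
    fun s => {ω' | Y (s + 1) ω' ≤ Y s ω' - (if 0 < Y s ω' then 1 / 2 else 0)} with hSuccdef
  set Bad : ℕ → Set Ω :=
    fun s => {ω | ((((T - s) / 16 : ℕ)) : ℝ) ≤ Y s ω} ∩ (Succ s)ᶜ with hBaddef
  have hSuccMeas : ∀ s, MeasurableSet (Succ s) := by
    intro s
    have h1 : Measurable (fun ω => Y s ω - (if 0 < Y s ω then (1/2 : ℝ) else 0)) := by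
      apply (hYm s).sub
      exact Measurable.ite (measurableSet_lt measurable_const (hYm s))
        measurable_const measurable_const
    exact measurableSet_le (hYm (s+1)) h1
  have hBadMeas : ∀ s, MeasurableSet[F (s+1)] (Bad s) := by
    intro s
    have hYs : Measurable[F (s+1)] (Y s) := (hadapted s).mono (F.mono (Nat.le_succ s)) le_rfl
    apply MeasurableSet.inter
    · exact measurableSet_le measurable_const hYs
    · apply MeasurableSet.compl
      have h1 : Measurable[F (s+1)] (fun ω => Y s ω - (if 0 < Y s ω then (1/2 : ℝ) else 0)) := by
        apply hYs.sub
        exact Measurable.ite (measurableSet_lt measurable_const hYs)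
          measurable_const measurable_const
      exact measurableSet_le (hadapted (s+1)) h1
  -- step bound
  have hstepA : ∀ n, n < T → ∀ A : Set Ω, MeasurableSet[F n] A →
      (μ (A ∩ Bad n)).toReal ≤ q * (μ A).toReal := by
    intro n hn A hA
    exact step_bound μ F n (Succ n) {ω | ((((T - n) / 16 : ℕ)) : ℝ) ≤ Y n ω} A
      (hSuccMeas n) (measurableSet_le measurable_const (hadapted n)) hA q hq0
      (hdrift n hn)
  have hprod := prod_bound μ F T Bad hBadMeas q hq0 hstepA T
  -- the bad-window union
  set fs : ℕ → Finset (Finset ℕ) :=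
    fun m => (Finset.Ico (T - m) T).powerset.filter (fun S => (m:ℝ) ≤ 8 * S.card) with hfsdef
  have hincl : {ω | Y T ω ≠ 0} ⊆
      ⋃ m ∈ Finset.Icc 1 T, ⋃ S ∈ fs m, ⋂ s ∈ S, Bad s := by
    intro ω hω
    obtain ⟨m, hm1, hmT, S, hSsub, hScard, hSprop⟩ :=
      exists_bad_window T (fun s => Y s ω) (fun s => hhalf s ω) (hstart ω)
        (fun s => hstep s ω) hω
    simp only [Set.mem_iUnion]
    refine ⟨m, Finset.mem_Icc.mpr ⟨hm1, hmT⟩, S,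
      Finset.mem_filter.mpr ⟨Finset.mem_powerset.mpr hSsub, hScard⟩, ?_⟩
    simp only [Set.mem_iInter]
    intro s hs
    obtain ⟨h1, h2⟩ := hSprop s hs
    exact ⟨h1, h2⟩
  -- measure bound on union
  have hsum1 : μ {ω | Y T ω ≠ 0} ≤ ∑ m ∈ Finset.Icc 1 T, ∑ S ∈ fs m, μ (⋂ s ∈ S, Bad s) :=
    le_trans (measure_mono hincl)
      (le_trans (measure_biUnion_finset_le _ _)
        (Finset.sum_le_sum (fun m _ => measure_biUnion_finset_le _ _)))
  have hne : ∀ m ∈ Finset.Icc 1 T, ∀ S ∈ fs m, μ (⋂ s ∈ S, Bad s) ≠ ⊤ :=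
    fun m _ S _ => measure_ne_top μ _
  have hsumne : (∑ m ∈ Finset.Icc 1 T, ∑ S ∈ fs m, μ (⋂ s ∈ S, Bad s)) ≠ ⊤ := by
    refine (ENNReal.sum_lt_top.mpr (fun m hm => ?_)).ne
    exact ENNReal.sum_lt_top.mpr (fun S hS => (measure_ne_top μ _).lt_top)
  have hreal1 : (μ {ω | Y T ω ≠ 0}).toReal ≤
      ∑ m ∈ Finset.Icc 1 T, ∑ S ∈ fs m, (μ (⋂ s ∈ S, Bad s)).toReal := by
    have := ENNReal.toReal_mono hsumne hsum1
    rwa [ENNReal.toReal_sum (fun m hm => by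
        refine (ENNReal.sum_lt_top.mpr (fun S hS => (measure_ne_top μ _).lt_top)).ne),
      Finset.sum_congr rfl (fun m hm => ENNReal.toReal_sum
        (fun S hS => measure_ne_top μ _))] at this
  -- bound each term
  have hterm : ∀ m ∈ Finset.Icc 1 T, ∑ S ∈ fs m, (μ (⋂ s ∈ S, Bad s)).toReal ≤ (2*r)^m := by
    intro m hm
    obtain ⟨hm1, hmT⟩ := Finset.mem_Icc.mp hm
    have hstep2 : ∀ S ∈ fs m, (μ (⋂ s ∈ S, Bad s)).toReal ≤ r ^ m := by
      intro S hS
      obtain ⟨hSp, hSc⟩ := Finset.mem_filter.mp hS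
      have hSsub := Finset.mem_powerset.mp hSp
      have hsT : ∀ s ∈ S, s < T := fun s hs => (Finset.mem_Ico.mp (hSsub hs)).2
      calc (μ (⋂ s ∈ S, Bad s)).toReal ≤ q ^ S.card :=
            hprod S hsT (fun s hs => Finset.mem_range.mpr (hsT s hs))
        _ ≤ r ^ m := pow_card_le q hq0 hq1 m S.card hm1 hSc
    calc ∑ S ∈ fs m, (μ (⋂ s ∈ S, Bad s)).toReal ≤ ∑ S ∈ fs m, r ^ m :=
          Finset.sum_le_sum hstep2
      _ = (fs m).card * r ^ m := by rw [Finset.sum_const, nsmul_eq_mul]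
      _ ≤ 2^m * r^m := by
          apply mul_le_mul_of_nonneg_right _ (pow_nonneg hr0 m)
          have h1 : (fs m).card ≤ 2^m := by
            calc (fs m).card ≤ (Finset.Ico (T-m) T).powerset.card :=
                  Finset.card_filter_le _ _
              _ = 2 ^ (Finset.Ico (T-m) T).card := Finset.card_powerset _
              _ = 2 ^ m := by rw [Nat.card_Ico, Nat.sub_sub_self hmT]
          calc ((fs m).card : ℝ) ≤ ((2^m : ℕ) : ℝ) := by exact_mod_cast h1
            _ = 2^m := by push_cast; ring
      _ = (2*r)^m := by rw [mul_pow]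
  have hreal2 : (μ {ω | Y T ω ≠ 0}).toReal ≤ 4 * r := by
    calc (μ {ω | Y T ω ≠ 0}).toReal
        ≤ ∑ m ∈ Finset.Icc 1 T, ∑ S ∈ fs m, (μ (⋂ s ∈ S, Bad s)).toReal := hreal1
      _ ≤ ∑ m ∈ Finset.Icc 1 T, (2*r)^m := Finset.sum_le_sum hterm
      _ ≤ 2 * (2*r) := geom_tail (2*r) (by linarith) (by linarith) T
      _ = 4 * r := by ring
  -- conclude
  have hZmeas : MeasurableSet {ω | Y T ω = 0} := by
    have := hYm T (measurableSet_singleton (0:ℝ))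
    exact this
  have hcompl : μ {ω | Y T ω = 0} + μ {ω | Y T ω ≠ 0} = 1 := by
    have h1 : {ω | Y T ω ≠ 0} = {ω | Y T ω = 0}ᶜ := rfl
    rw [h1, measure_add_measure_compl hZmeas, measure_univ]
  have htr : (μ {ω | Y T ω = 0}).toReal + (μ {ω | Y T ω ≠ 0}).toReal = 1 := by
    rw [← ENNReal.toReal_add (measure_ne_top μ _) (measure_ne_top μ _), hcompl]
    simp
  linarith
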